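/- Let X_k, Y_k be integers with X_k + i ≡ 0 (mod A_i^[k]) and Y_k + j ≡ 0 (mod B_j^[k]) for all |i|, |j| ≤ k. Then for every pair (i,j) with max(1,|i|)·max(1,|j|) ≤ k, gcd(X_k + i, Y_k + j) > 1 (indeed the prime p_{i,j} divides both X_k + i and Y_k + j). -/

import Mathlib

/-- Ω_k as a finite set of lattice points. -/
noncomputable def OmegaF (k : ℕ) : Finset (ℤ × ℤ) :=
  (Finset.Icc (-(k : ℤ), -(k : ℤ)) ((k : ℤ), (k : ℤ))).filter
    (fun p => max 1 |p.1| * max 1 |p.2| ≤ (k : ℤ))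

/-- A_i^[k] = ∏_{s : (i,s) ∈ Ω_k} p_{i,s}. -/
noncomputable def A (k : ℕ) (p : ℤ × ℤ → ℕ) (i : ℤ) : ℕ :=
  ∏ s ∈ (Finset.Icc (-(k : ℤ)) (k : ℤ)).filter (fun s => max 1 |i| * max 1 |s| ≤ (k : ℤ)),
    p (i, s)

/-- B_j^[k] = ∏_{s : (s,j) ∈ Ω_k} p_{s,j}. -/
noncomputable def B (k : ℕ) (p : ℤ × ℤ → ℕ) (j : ℤ) : ℕ :=
  ∏ s ∈ (Finset.Icc (-(k : ℤ)) (k : ℤ)).filter (fun s => max 1 |s| * max 1 |j| ≤ (k : ℤ)),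
    p (s, j)

/-- P_k = ∏_{(i,j) ∈ Ω_k} p_{i,j}. -/
noncomputable def P (k : ℕ) (p : ℤ × ℤ → ℕ) : ℕ := ∏ q ∈ OmegaF k, p q

/-- If X_k + i ≡ 0 (mod A_i^[k]) and Y_k + j ≡ 0 (mod B_j^[k]) for all |i|,|j| ≤ k, then for
    every (i,j) with max(1,|i|)·max(1,|j|) ≤ k the prime p_{i,j} divides both X_k + i and
    Y_k + j, and in particular gcd(X_k + i, Y_k + j) > 1. -/
theorem gcd_gt_one (k : ℕ) (hk : 1 ≤ k) (p : ℤ × ℤ → ℕ)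
    (hprime : ∀ q ∈ OmegaF k, (p q).Prime)
    (hinj : Set.InjOn p (OmegaF k))
    (X Y : ℤ)
    (hX : ∀ i ∈ Finset.Icc (-(k : ℤ)) (k : ℤ), (A k p i : ℤ) ∣ X + i)
    (hY : ∀ j ∈ Finset.Icc (-(k : ℤ)) (k : ℤ), (B k p j : ℤ) ∣ Y + j) :
    ∀ i j : ℤ, max 1 |i| * max 1 |j| ≤ (k : ℤ) →
      ((p (i, j) : ℤ) ∣ X + i ∧ (p (i, j) : ℤ) ∣ Y + j) ∧
      1 < Int.gcd (X + i) (Y + j) := by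
  intro i j hij
  have h1i : (1:ℤ) ≤ max 1 |i| := le_max_left _ _
  have h1j : (1:ℤ) ≤ max 1 |j| := le_max_left _ _
  have hiB : |i| ≤ (k:ℤ) := by
    calc |i| ≤ max 1 |i| := le_max_right _ _
    _ ≤ max 1 |i| * max 1 |j| := le_mul_of_one_le_right (by linarith) h1j
    _ ≤ (k:ℤ) := hij
  have hjB : |j| ≤ (k:ℤ) := by
    calc |j| ≤ max 1 |j| := le_max_right _ _
    _ ≤ max 1 |i| * max 1 |j| := le_mul_of_one_le_left (by linarith) h1i
    _ ≤ (k:ℤ) := hij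
  have hiIcc : i ∈ Finset.Icc (-(k:ℤ)) (k:ℤ) := by
    simp [Finset.mem_Icc, abs_le] at hiB ⊢; exact ⟨hiB.1, hiB.2⟩
  have hjIcc : j ∈ Finset.Icc (-(k:ℤ)) (k:ℤ) := by
    simp [Finset.mem_Icc, abs_le] at hjB ⊢; exact ⟨hjB.1, hjB.2⟩
  have hmem : (i, j) ∈ OmegaF k := by
    simp only [OmegaF, Finset.mem_filter, Finset.mem_Icc, Prod.mk_le_mk]
    rw [abs_le] at hiB hjB
    exact ⟨⟨⟨hiB.1, hjB.1⟩, ⟨hiB.2, hjB.2⟩⟩, hij⟩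
  have hp := hprime _ hmem
  have hdA : (p (i, j) : ℕ) ∣ A k p i := by
    apply Finset.dvd_prod_of_mem
    simp only [Finset.mem_filter]
    exact ⟨hjIcc, hij⟩
  have hdB : (p (i, j) : ℕ) ∣ B k p j := by
    apply Finset.dvd_prod_of_mem
    simp only [Finset.mem_filter]
    exact ⟨hiIcc, hij⟩
  have h1 : (p (i, j) : ℤ) ∣ X + i := dvd_trans (Int.natCast_dvd_natCast.mpr hdA) (hX i hiIcc)
  have h2 : (p (i, j) : ℤ) ∣ Y + j := dvd_trans (Int.natCast_dvd_natCast.mpr hdB) (hY j hjIcc)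
  refine ⟨⟨h1, h2⟩, ?_⟩
  rcases Nat.lt_or_ge 1 (Int.gcd (X + i) (Y + j)) with h | h
  · exact h
  exfalso
  have hp2 := hp.two_le
  -- p(i,j) divides the gcd
  have hdg : (p (i, j) : ℤ) ∣ (Int.gcd (X + i) (Y + j) : ℤ) := Int.dvd_coe_gcd h1 h2
  have hdgn : p (i, j) ∣ Int.gcd (X + i) (Y + j) := Int.natCast_dvd_natCast.mp hdg
  have hg0 : Int.gcd (X + i) (Y + j) = 0 := by
    rcases Nat.le_one_iff_eq_zero_or_eq_one.mp h with h' | h'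
    · exact h'
    · exfalso; rw [h'] at hdgn; have := Nat.le_of_dvd one_pos hdgn; omega
  have hXi : X + i = 0 := by
    have := Int.gcd_eq_zero_iff.mp hg0
    exact this.1
  -- pick a neighbor i'
  set i' : ℤ := if i = (k : ℤ) then i - 1 else i + 1 with hi'
  have hi'Icc : i' ∈ Finset.Icc (-(k:ℤ)) (k:ℤ) := by
    rw [abs_le] at hiB
    simp only [hi', Finset.mem_Icc]
    split_ifs with hik
    · constructor <;> omega
    · have : i < (k:ℤ) := lt_of_le_of_ne hiB.2 hik
      constructor <;> omega
  have hAdvd : (A k p i' : ℤ) ∣ X + i' := hX i' hi'Icc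
  have hdiff : X + i' = i' - i := by omega
  have hone : (A k p i' : ℤ) ∣ 1 := by
    rw [hdiff] at hAdvd
    have : i' - i = 1 ∨ i' - i = -1 := by
      simp only [hi']; split_ifs <;> [right; left] <;> ring
    rcases this with h' | h'
    · rwa [h'] at hAdvd
    · rw [h'] at hAdvd; exact dvd_neg.mp hAdvd
  have hA1 : A k p i' = 1 := by
    have := Int.eq_one_of_dvd_one (by positivity) hone
    exact_mod_cast this
  -- but p(i',0) divides A k p i'
  have h01 : |i'| ≤ (k:ℤ) := by
    rw [Finset.mem_Icc] at hi'Icc; rw [abs_le]; exact hi'Icc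
  have hcond : max 1 |i'| * max 1 |(0:ℤ)| ≤ (k:ℤ) := by
    simp only [abs_zero]
    have : max (1:ℤ) 0 = 1 := by norm_num
    rw [this, mul_one]
    have : (1:ℤ) ≤ (k:ℤ) := by exact_mod_cast hk
    exact max_le this h01
  have hmem0 : (0:ℤ) ∈ (Finset.Icc (-(k:ℤ)) (k:ℤ)).filter (fun s => max 1 |i'| * max 1 |s| ≤ (k:ℤ)) := by
    simp only [Finset.mem_filter, Finset.mem_Icc]
    refine ⟨⟨by omega, by omega⟩, hcond⟩
  have hdvdA : p (i', 0) ∣ A k p i' := Finset.dvd_prod_of_mem _ hmem0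
  have hmemOm : ((i':ℤ), (0:ℤ)) ∈ OmegaF k := by
    simp only [OmegaF, Finset.mem_filter, Finset.mem_Icc, Prod.mk_le_mk]
    rw [abs_le] at h01
    exact ⟨⟨⟨h01.1, by omega⟩, ⟨h01.2, by omega⟩⟩, hcond⟩
  have := (hprime _ hmemOm).two_le
  rw [hA1] at hdvdA
  have := Nat.le_of_dvd one_pos hdvdA
  omega
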